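/- arXiv:1809.01615 — 3 statements merged into one kernel-verified Lean document; each statement's English description precedes it below -/
import Mathlib

section
/- For all natural numbers N, n1, n2, the sum over all subsets K of {1,…,N} of ((|K|+n1)!/n1!)·((N−|K|+n2)!/n2!) equals (N+n1+n2+1)!/(n1+n2+1)!, where |K| denotes the cardinality of K. -/
open Finset

lemma asc_succ' (n k : ℕ) : (n + 1).ascFactorial (k + 1) = (n + 1) * (n + 2).ascFactorial k := by
  have h := Nat.succ_ascFactorial (n + 1) k
  rw [Nat.ascFactorial_succ]
  exact h.symm

lemma aux_asc (N : ℕ) : ∀ n1 n2 : ℕ,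
    ∑ K ∈ (Finset.Icc 1 N).powerset,
      (n1 + 1).ascFactorial K.card * (n2 + 1).ascFactorial (N - K.card)
      = (n1 + n2 + 2).ascFactorial N := by
  induction N with
  | zero => intro n1 n2; simp
  | succ N ih =>
    intro n1 n2
    have hins : Finset.Icc 1 (N + 1) = insert (N + 1) (Finset.Icc 1 N) := by
      rw [← Finset.insert_Icc_right_eq_Icc_add_one (by omega)]
    have hnot : (N + 1) ∉ Finset.Icc 1 N := by simp
    rw [hins, Finset.sum_powerset_insert hnot]
    have h1 : ∑ K ∈ (Finset.Icc 1 N).powerset,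
        (n1 + 1).ascFactorial K.card * (n2 + 1).ascFactorial (N + 1 - K.card)
        = (n2 + 1) * (n1 + (n2 + 1) + 2).ascFactorial N := by
      rw [← ih n1 (n2 + 1), Finset.mul_sum]
      refine Finset.sum_congr rfl fun K hK => ?_
      have hcard : K.card ≤ N := by
        have := Finset.card_le_card (Finset.mem_powerset.mp hK)
        simpa using this
      have : N + 1 - K.card = (N - K.card) + 1 := by omega
      rw [this, asc_succ']
      ring
    have h2 : ∑ K ∈ (Finset.Icc 1 N).powerset,
        (n1 + 1).ascFactorial (insert (N + 1) K).card *
          (n2 + 1).ascFactorial (N + 1 - (insert (N + 1) K).card)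
        = (n1 + 1) * ((n1 + 1) + n2 + 2).ascFactorial N := by
      rw [← ih (n1 + 1) n2, Finset.mul_sum]
      refine Finset.sum_congr rfl fun K hK => ?_
      have hsub := Finset.mem_powerset.mp hK
      have hni : (N + 1) ∉ K := fun h => hnot (hsub h)
      have hcard : (insert (N + 1) K).card = K.card + 1 := Finset.card_insert_of_notMem hni
      have hle : K.card ≤ N := by simpa using Finset.card_le_card hsub
      rw [hcard, asc_succ']
      have : N + 1 - (K.card + 1) = N - K.card := by omega
      rw [this]
      ring
    rw [h1, h2]
    have h3 : (n1 + n2 + 2).ascFactorial (N + 1)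
        = (n1 + n2 + 2) * (n1 + n2 + 3).ascFactorial N := by
      have := asc_succ' (n1 + n2 + 1) N
      convert this using 3 <;> omega
    rw [h3]
    have e1 : n1 + (n2 + 1) + 2 = n1 + n2 + 3 := by omega
    have e2 : (n1 + 1) + n2 + 2 = n1 + n2 + 3 := by omega
    rw [e1, e2]
    ring

/-- Lemma 2 of the paper: sum over subsets `K` of `{1,…,N}` of
`((|K|+n₁)!/n₁!)·((N−|K|+n₂)!/n₂!)` equals `(N+n₁+n₂+1)!/(n₁+n₂+1)!`.
The divisions are exact divisions of natural numbers. -/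
theorem sum_powerset_factorial_ratio (N n1 n2 : ℕ) :
    ∑ K ∈ (Finset.Icc 1 N).powerset,
      ((K.card + n1).factorial / n1.factorial) *
        ((N - K.card + n2).factorial / n2.factorial)
      = (N + n1 + n2 + 1).factorial / (n1 + n2 + 1).factorial := by
  have key := aux_asc N n1 n2
  have hL : ∀ K : Finset ℕ,
      ((K.card + n1).factorial / n1.factorial) * ((N - K.card + n2).factorial / n2.factorial)
      = (n1 + 1).ascFactorial K.card * (n2 + 1).ascFactorial (N - K.card) := by
    intro K
    rw [Nat.ascFactorial_eq_div, Nat.ascFactorial_eq_div, Nat.add_comm n1 K.card,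
      Nat.add_comm n2 (N - K.card)]
  have hR : (N + n1 + n2 + 1).factorial / (n1 + n2 + 1).factorial
      = (n1 + n2 + 2).ascFactorial N := by
    rw [Nat.ascFactorial_eq_div]
    have e : n1 + n2 + 1 + N = N + n1 + n2 + 1 := by omega
    rw [e]
  rw [hR, ← key]
  exact Finset.sum_congr rfl fun K _ => hL K
end

section
/- For every natural number m and every real number x with 0 ≤ x ≤ 1/4, the series Σ_{n≥0} B_{n,m} x^n converges and its sum equals ((1−√(1−4x))/2)^m. -/
open Finset

/-- `B n m` from Lemma 3 of the paper: for `n ≥ m ≥ 1` it is the sum over all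
`m`-tuples `(n₁,…,n_m)` of positive integers with `n₁+⋯+n_m = n` of
`A_{n₁−1}⋯A_{n_m−1}` (where `A_k = catalan k`); `B 0 0 = 1`; and it is `0`
otherwise.  (The sum over positive `m`-tuples summing to `n` is empty in all
the "otherwise" cases, and for `n = m = 0` the unique empty tuple contributes
the empty product `1`.) -/
def B (n m : ℕ) : ℕ :=
  ∑ f ∈ Finset.Nat.antidiagonalTuple m n,
    if ∀ i, f i ≠ 0 then ∏ i, catalan (f i - 1) else 0

lemma cb_rec (N : ℕ) :
    Nat.centralBinom (N + 1) + 2 * catalan N = 4 * Nat.centralBinom N := by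
  apply Nat.eq_of_mul_eq_mul_left (show 0 < N + 1 by omega)
  have h1 := Nat.succ_mul_centralBinom_succ N
  have h2 := succ_mul_catalan_eq_centralBinom N
  calc (N + 1) * (Nat.centralBinom (N + 1) + 2 * catalan N)
      = (N + 1) * Nat.centralBinom (N + 1) + 2 * ((N + 1) * catalan N) := by ring
    _ = 2 * (2 * N + 1) * Nat.centralBinom N + 2 * Nat.centralBinom N := by rw [h1, h2]
    _ = (N + 1) * (4 * Nat.centralBinom N) := by ring

lemma partial_sum_quarter (N : ℕ) :
    ∑ n ∈ range N, (catalan n : ℝ) * (1 / 4) ^ (n + 1)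
      = (1 - Nat.centralBinom N / 4 ^ N) / 2 := by
  induction N with
  | zero => simp [Nat.centralBinom]
  | succ N ih =>
    rw [Finset.sum_range_succ, ih]
    have h' : (Nat.centralBinom (N + 1) : ℝ) + 2 * catalan N = 4 * Nat.centralBinom N := by
      exact_mod_cast congrArg (Nat.cast : ℕ → ℝ) (cb_rec N)
    have h4 : (4 : ℝ) ^ N ≠ 0 := by positivity
    have h4' : (4 : ℝ) ^ (N + 1) ≠ 0 := by positivity
    rw [one_div_pow, pow_succ]
    linear_combination (1 / (2 * ((4:ℝ) ^ N * 4))) * h'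

lemma partial_sum_le (x : ℝ) (hx0 : 0 ≤ x) (hx1 : x ≤ 1 / 4) (N : ℕ) :
    ∑ n ∈ range N, (catalan n : ℝ) * x ^ (n + 1) ≤ 1 / 2 := by
  have hle : ∑ n ∈ range N, (catalan n : ℝ) * x ^ (n + 1)
      ≤ ∑ n ∈ range N, (catalan n : ℝ) * (1 / 4) ^ (n + 1) := by
    apply Finset.sum_le_sum
    intro i _
    have h1 : x ^ (i + 1) ≤ (1 / 4 : ℝ) ^ (i + 1) := pow_le_pow_left₀ hx0 hx1 (i + 1)
    have h2 : (0:ℝ) ≤ (catalan i : ℝ) := Nat.cast_nonneg _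
    nlinarith
  rw [partial_sum_quarter] at hle
  have : (0:ℝ) ≤ Nat.centralBinom N / 4 ^ N := by positivity
  linarith

lemma catalan_nonneg_term (x : ℝ) (hx0 : 0 ≤ x) (n : ℕ) :
    0 ≤ (catalan n : ℝ) * x ^ (n + 1) := by positivity

lemma summable_catalan (x : ℝ) (hx0 : 0 ≤ x) (hx1 : x ≤ 1 / 4) :
    Summable (fun n : ℕ => (catalan n : ℝ) * x ^ (n + 1)) :=
  summable_of_sum_range_le (catalan_nonneg_term x hx0) (partial_sum_le x hx0 hx1)

/-- The Catalan generating function at `x ∈ [0, 1/4]`. -/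
lemma hasSum_catalan (x : ℝ) (hx0 : 0 ≤ x) (hx1 : x ≤ 1 / 4) :
    HasSum (fun n : ℕ => (catalan n : ℝ) * x ^ (n + 1))
      ((1 - Real.sqrt (1 - 4 * x)) / 2) := by
  set c : ℕ → ℝ := fun n => (catalan n : ℝ) * x ^ (n + 1) with hc
  have hsum : Summable c := summable_catalan x hx0 hx1
  set y : ℝ := ∑' n, c n with hy
  have hS : HasSum c y := hsum.hasSum
  have hy0 : 0 ≤ y := tsum_nonneg (catalan_nonneg_term x hx0)
  have hy2 : y ≤ 1 / 2 :=
    Real.tsum_le_of_sum_range_le (catalan_nonneg_term x hx0) (partial_sum_le x hx0 hx1)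
  have hnorm : Summable (fun n => ‖c n‖) := by
    refine hsum.congr fun n => ?_
    exact (Real.norm_of_nonneg (catalan_nonneg_term x hx0 n)).symm
  have hcauchy : y * y = ∑' n : ℕ, ∑ kl ∈ antidiagonal n, c kl.1 * c kl.2 :=
    tsum_mul_tsum_eq_tsum_sum_antidiagonal_of_summable_norm hnorm hnorm
  have hterm : ∀ n : ℕ, ∑ kl ∈ antidiagonal n, c kl.1 * c kl.2
      = (catalan (n + 1) : ℝ) * x ^ (n + 2) := by
    intro n
    have e : ∑ kl ∈ antidiagonal n, c kl.1 * c kl.2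
        = ∑ kl ∈ antidiagonal n,
            ((catalan kl.1 : ℝ) * (catalan kl.2 : ℝ)) * x ^ (n + 2) := by
      apply Finset.sum_congr rfl
      intro kl hkl
      have hkl' : kl.1 + kl.2 = n := Finset.HasAntidiagonal.mem_antidiagonal.mp hkl
      have hpow : (kl.1 + 1) + (kl.2 + 1) = n + 2 := by omega
      simp only [hc]
      rw [mul_mul_mul_comm, ← pow_add, hpow]
    rw [e, ← Finset.sum_mul]
    congr 1
    rw [catalan_succ' n]
    push_cast
    rfl
  have hsum1 : ∑ i ∈ range 1, c i = x := by simp [hc]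
  have hshift : HasSum (fun n : ℕ => c (n + 1)) (y - x) := by
    refine (hasSum_nat_add_iff 1).mpr ?_
    rw [hsum1, sub_add_cancel]
    exact hS
  have hval : y * y = y - x := by
    rw [hcauchy]
    have e2 : (fun n : ℕ => ∑ kl ∈ antidiagonal n, c kl.1 * c kl.2)
        = fun n : ℕ => c (n + 1) := by
      funext n
      rw [hterm n]
    rw [e2, hshift.tsum_eq]
  have hsq : (1 - 2 * y) ^ 2 = 1 - 4 * x := by nlinarith [hval]
  have hroot : Real.sqrt (1 - 4 * x) = 1 - 2 * y := by
    rw [← hsq, Real.sqrt_sq (by linarith)]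
  have e3 : (1 - Real.sqrt (1 - 4 * x)) / 2 = y := by rw [hroot]; ring
  rw [e3]
  exact hS

lemma B_zero (n : ℕ) : B n 0 = if n = 0 then 1 else 0 := by
  cases n with
  | zero => simp [B]
  | succ n => simp [B]

/-- Recurrence: peeling off the first component of the tuple. -/
lemma B_succ (n m : ℕ) :
    B n (m + 1) = ∑ p ∈ antidiagonal n,
      (if p.1 = 0 then 0 else catalan (p.1 - 1)) * B p.2 m := by
  unfold B
  simp_rw [Finset.mul_sum]
  rw [Finset.sum_sigma']
  refine Eq.symm (Finset.sum_nbij' (i := fun s => Fin.cons s.1.1 s.2)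
    (j := fun f => ⟨(f 0, ∑ i : Fin m, f i.succ), Fin.tail f⟩) ?_ ?_ ?_ ?_ ?_)
  · rintro ⟨⟨a, b⟩, g⟩ hs
    simp only [Finset.mem_sigma, Finset.HasAntidiagonal.mem_antidiagonal,
      Finset.Nat.mem_antidiagonalTuple] at hs ⊢
    rw [Fin.sum_cons, hs.2, hs.1]
  · intro f hf
    simp only [Finset.Nat.mem_antidiagonalTuple, Finset.mem_sigma,
      Finset.HasAntidiagonal.mem_antidiagonal] at hf ⊢
    refine ⟨?_, rfl⟩
    rw [← hf, Fin.sum_univ_succ]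
  · rintro ⟨⟨a, b⟩, g⟩ hs
    simp only [Finset.mem_sigma, Finset.HasAntidiagonal.mem_antidiagonal,
      Finset.Nat.mem_antidiagonalTuple] at hs
    have h1 : (Fin.cons a g : Fin (m+1) → ℕ) 0 = a := Fin.cons_zero _ _
    have h2 : ∑ i : Fin m, (Fin.cons a g : Fin (m+1) → ℕ) i.succ = b := by
      simp [Fin.cons_succ, hs.2]
    have h3 : Fin.tail (Fin.cons a g : Fin (m+1) → ℕ) = g := Fin.tail_cons _ _
    have hsb : ∑ i : Fin m, g i = b := hs.2
    simp [Sigma.ext_iff, h1, h2, h3, hsb]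
  · intro f hf
    exact Fin.cons_self_tail f
  · rintro ⟨⟨a, b⟩, g⟩ hs
    simp only
    have hall : (∀ i : Fin (m+1), (Fin.cons a g : Fin (m+1) → ℕ) i ≠ 0)
        ↔ (a ≠ 0 ∧ ∀ i : Fin m, g i ≠ 0) := by
      rw [Fin.forall_fin_succ]
      simp [Fin.cons_succ]
    have hprod : ∏ i : Fin (m+1), catalan ((Fin.cons a g : Fin (m+1) → ℕ) i - 1)
        = catalan (a - 1) * ∏ i : Fin m, catalan (g i - 1) := by
      rw [Fin.prod_univ_succ]
      simp [Fin.cons_succ]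
    by_cases ha : a = 0
    · have hno : ¬ ∀ i : Fin (m+1), (Fin.cons a g : Fin (m+1) → ℕ) i ≠ 0 :=
        fun h => (hall.mp h).1 ha
      rw [if_pos ha, zero_mul, if_neg hno]
    · by_cases hg : ∀ i : Fin m, g i ≠ 0
      · rw [if_pos (hall.mpr ⟨ha, hg⟩), hprod, if_neg ha, if_pos hg]
      · rw [if_neg (fun h => hg (hall.mp h).2), if_neg ha, if_neg hg, mul_zero]

/-- Second part of Lemma 3 of the paper: for `0 ≤ x ≤ 1/4` the series
`Σ_{n≥0} B_{n,m} xⁿ` converges with sum `((1−√(1−4x))/2)^m`. -/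
theorem hasSum_B_mul_pow (m : ℕ) (x : ℝ) (hx0 : 0 ≤ x) (hx1 : x ≤ 1 / 4) :
    HasSum (fun n : ℕ => (B n m : ℝ) * x ^ n)
      (((1 - Real.sqrt (1 - 4 * x)) / 2) ^ m) := by
  induction m with
  | zero =>
    have : (fun n : ℕ => (B n 0 : ℝ) * x ^ n)
        = fun n : ℕ => if n = 0 then (1:ℝ) else 0 := by
      funext n
      rw [B_zero]
      cases n with
      | zero => simp
      | succ n => simp
    rw [this, pow_zero]
    exact hasSum_ite_eq 0 1
  | succ m ih =>
    set y : ℝ := (1 - Real.sqrt (1 - 4 * x)) / 2 with hy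
    set bf : ℕ → ℝ := fun i => (if i = 0 then 0 else (catalan (i - 1) : ℝ)) * x ^ i with hbf
    have hb : HasSum bf y := by
      have h1 : HasSum (fun n : ℕ => bf (n + 1)) (y - ∑ i ∈ range 1, bf i) := by
        have : (fun n : ℕ => bf (n + 1)) = fun n : ℕ => (catalan n : ℝ) * x ^ (n + 1) := by
          funext n; simp [hbf]
        rw [this]
        have h0 : ∑ i ∈ range 1, bf i = 0 := by simp [hbf]
        rw [h0, sub_zero]
        exact hasSum_catalan x hx0 hx1
      have h2 := (hasSum_nat_add_iff (f := bf) 1).mp h1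
      simpa [hbf] using h2
    have hbnorm : Summable (fun n => ‖bf n‖) := by
      refine hb.summable.congr fun n => ?_
      refine (Real.norm_of_nonneg ?_).symm
      positivity
    have hBnorm : Summable (fun n => ‖(B n m : ℝ) * x ^ n‖) := by
      refine ih.summable.congr fun n => ?_
      refine (Real.norm_of_nonneg ?_).symm
      positivity
    have key : ∀ n : ℕ, ∑ kl ∈ antidiagonal n, bf kl.1 * ((B kl.2 m : ℝ) * x ^ kl.2)
        = (B n (m + 1) : ℝ) * x ^ n := by
      intro n
      rw [B_succ n m]
      push_cast
      rw [Finset.sum_mul]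
      apply Finset.sum_congr rfl
      intro kl hkl
      have hkl' : kl.1 + kl.2 = n := Finset.HasAntidiagonal.mem_antidiagonal.mp hkl
      simp only [hbf]
      rw [← hkl', pow_add]
      by_cases h : kl.1 = 0 <;> simp [h] <;> try ring
    have hSummable : Summable (fun n : ℕ => (B n (m + 1) : ℝ) * x ^ n) := by
      have := (summable_norm_sum_mul_antidiagonal_of_summable_norm hbnorm hBnorm).of_norm
      refine this.congr fun n => key n
    have htsum : (∑' n : ℕ, (B n (m + 1) : ℝ) * x ^ n) = y * y ^ m := by
      have h1 := tsum_mul_tsum_eq_tsum_sum_antidiagonal_of_summable_norm hbnorm hBnorm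
      rw [hb.tsum_eq, ih.tsum_eq] at h1
      rw [h1]
      exact tsum_congr fun n => (key n).symm
    have := hSummable.hasSum
    rw [htsum] at this
    rw [pow_succ, mul_comm (y ^ m) y]
    exact this
end

section
/- For all integers n ≥ 1 and m ≥ 1, one has n·B_{n,m} = Σ_{h=0}^{n−1} A_h·( m·B_{n−h−1,m−1} + (2n−2h−m−2)·B_{n−h−1,m} ), as an identity of integers. -/
open Finset

namespace BRecAux
open PowerSeries

open PowerSeries

noncomputable def CS : ℤ⟦X⟧ := PowerSeries.mk fun n => (catalan n : ℤ)

lemma coeff_CS (n : ℕ) : coeff n CS = (catalan n : ℤ) := coeff_mk n _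

lemma CS_eq : CS = 1 + X * CS ^ 2 := by
  ext n
  cases n with
  | zero => simp [coeff_CS, catalan_zero]
  | succ k =>
    rw [map_add, coeff_CS, coeff_succ_X_mul, sq, coeff_mul,
      Finset.Nat.sum_antidiagonal_eq_sum_range_succ_mk, coeff_one,
      if_neg (Nat.succ_ne_zero k), catalan_succ]
    push_cast [coeff_CS]
    rw [Fin.sum_univ_eq_sum_range (fun i => ((catalan i : ℤ) * (catalan (k - i) : ℤ)))]
    ring

lemma FS_eq : (X * CS : ℤ⟦X⟧) = X + (X * CS) ^ 2 := by
  linear_combination (X : ℤ⟦X⟧) * CS_eq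

lemma dFS : d⁄dX ℤ (X * CS) = 1 + 2 * (X * CS) * d⁄dX ℤ (X * CS) := by
  have h := congrArg (d⁄dX ℤ) FS_eq
  rw [map_add, derivative_X, Derivation.leibniz_pow] at h
  simp only [smul_eq_mul, nsmul_eq_mul, pow_one, Nat.cast_ofNat] at h
  linear_combination h

lemma key (M : ℕ) : d⁄dX ℤ ((X * CS) ^ (M + 1))
    = CS * (((M + 1 : ℕ) : ℤ⟦X⟧) * (X * CS) ^ M
        + 2 * X * d⁄dX ℤ ((X * CS) ^ (M + 1))
        - ((M + 1 : ℕ) : ℤ⟦X⟧) * (X * CS) ^ (M + 1)) := by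
  have hp : d⁄dX ℤ ((X * CS) ^ (M + 1))
      = ((M + 1 : ℕ) : ℤ⟦X⟧) * (X * CS) ^ M * d⁄dX ℤ (X * CS) := by
    rw [Derivation.leibniz_pow]
    simp only [smul_eq_mul, nsmul_eq_mul, Nat.add_sub_cancel]
    ring
  rw [hp]
  linear_combination (((M + 1 : ℕ) : ℤ⟦X⟧) * (X * CS) ^ M) * dFS
    - (((M + 1 : ℕ) : ℤ⟦X⟧) * (X * CS) ^ M) * CS_eq

lemma sum_tuple_succ {R : Type*} [AddCommMonoid R] (m n : ℕ) (g : (Fin (m + 1) → ℕ) → R) :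
    ∑ f ∈ Finset.Nat.antidiagonalTuple (m + 1) n, g f
      = ∑ p ∈ Finset.HasAntidiagonal.antidiagonal n, ∑ f ∈ Finset.Nat.antidiagonalTuple m p.2,
          g (Fin.cons p.1 f) := by
  rw [Finset.sum_sigma']
  refine Finset.sum_nbij' (fun f => ⟨(f 0, ∑ i, Fin.tail f i), Fin.tail f⟩)
    (fun x => Fin.cons x.1.1 x.2) ?_ ?_ ?_ ?_ ?_
  · intro f hf
    simp only [Finset.Nat.mem_antidiagonalTuple, Finset.mem_sigma,
      Finset.HasAntidiagonal.mem_antidiagonal] at hf ⊢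
    refine ⟨?_, trivial⟩
    rw [← hf, ← Fin.sum_cons (f 0) (Fin.tail f), Fin.cons_self_tail]
  · rintro ⟨⟨a, b⟩, f⟩ hx
    simp only [Finset.mem_sigma, Finset.HasAntidiagonal.mem_antidiagonal,
      Finset.Nat.mem_antidiagonalTuple] at hx ⊢
    rw [Fin.sum_cons, hx.2, hx.1]
  · intro f hf
    simp [Fin.cons_self_tail]
  · rintro ⟨⟨a, b⟩, f⟩ hx
    simp only [Finset.mem_sigma, Finset.HasAntidiagonal.mem_antidiagonal,
      Finset.Nat.mem_antidiagonalTuple] at hx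
    simp [Fin.tail_cons, hx.2]
  · intro f hf
    rw [Fin.cons_self_tail]

lemma coeff_pow_tuple (φ : ℤ⟦X⟧) (m n : ℕ) :
    coeff n (φ ^ m) = ∑ f ∈ Finset.Nat.antidiagonalTuple m n, ∏ i, coeff (f i) φ := by
  induction m generalizing n with
  | zero =>
    cases n with
    | zero => simp
    | succ k => simp [Finset.Nat.antidiagonalTuple_zero_succ, coeff_one]
  | succ m ih =>
    rw [pow_succ', coeff_mul, sum_tuple_succ]
    refine Finset.sum_congr rfl fun p hp => ?_
    rw [ih, Finset.mul_sum]
    refine Finset.sum_congr rfl fun f hf => ?_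
    simp [Fin.prod_univ_succ]

lemma coeff_FS (k : ℕ) :
    coeff k (X * CS) = if k = 0 then 0 else (catalan (k - 1) : ℤ) := by
  cases k with
  | zero => simp [coeff_zero_X_mul]
  | succ j => simp [coeff_succ_X_mul, coeff_CS]

lemma coeff_FS_pow (n m : ℕ) : coeff n ((X * CS) ^ m) = (B n m : ℤ) := by
  rw [coeff_pow_tuple, B, Nat.cast_sum]
  refine Finset.sum_congr rfl fun f hf => ?_
  by_cases h : ∀ i, f i ≠ 0
  · rw [if_pos h, Nat.cast_prod]
    refine Finset.prod_congr rfl fun i _ => ?_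
    rw [coeff_FS, if_neg (h i)]
  · rw [if_neg h, Nat.cast_zero]
    push_neg at h
    obtain ⟨i, hi⟩ := h
    exact Finset.prod_eq_zero (Finset.mem_univ i) (by rw [coeff_FS, if_pos hi])

lemma coeff_G (M k : ℕ) :
    coeff k (((M + 1 : ℕ) : ℤ⟦X⟧) * (X * CS) ^ M
        + 2 * X * d⁄dX ℤ ((X * CS) ^ (M + 1))
        - ((M + 1 : ℕ) : ℤ⟦X⟧) * (X * CS) ^ (M + 1))
      = ((M : ℤ) + 1) * (B k M : ℤ) + (2 * (k : ℤ) - (M : ℤ) - 1) * (B k (M + 1) : ℤ) := by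
  have hc : ∀ (φ : ℤ⟦X⟧) (j : ℕ), coeff j (((M + 1 : ℕ) : ℤ⟦X⟧) * φ)
      = ((M : ℤ) + 1) * coeff j φ := by
    intro φ j
    rw [← map_natCast (C (R := ℤ)) (M + 1), coeff_C_mul]
    push_cast
    ring
  have hx : coeff k (2 * X * d⁄dX ℤ ((X * CS) ^ (M + 1)))
      = 2 * (k : ℤ) * (B k (M + 1) : ℤ) := by
    have h2 : (2 * X * d⁄dX ℤ ((X * CS) ^ (M + 1)) : ℤ⟦X⟧)
        = C (R := ℤ) 2 * (X * d⁄dX ℤ ((X * CS) ^ (M + 1))) := by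
      rw [map_ofNat]; ring
    rw [h2, coeff_C_mul]
    cases k with
    | zero => simp [coeff_zero_X_mul]
    | succ j =>
      rw [coeff_succ_X_mul, coeff_derivative, coeff_FS_pow]
      push_cast
      ring
  rw [map_sub, map_add, hc, hc, hx, coeff_FS_pow, coeff_FS_pow]
  ring

end BRecAux

open BRecAux PowerSeries in
/-- Third part of Lemma 3 of the paper, as an identity of integers: for `n, m ≥ 1`,
`n·B_{n,m} = Σ_{h=0}^{n−1} A_h·(m·B_{n−h−1,m−1} + (2n−2h−m−2)·B_{n−h−1,m})`. -/
theorem B_recursion (n m : ℕ) (hn : 1 ≤ n) (hm : 1 ≤ m) :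
    (n : ℤ) * (B n m : ℤ)
      = ∑ h ∈ Finset.range n,
          (catalan h : ℤ) *
            ((m : ℤ) * (B (n - h - 1) (m - 1) : ℤ)
              + (2 * (n : ℤ) - 2 * (h : ℤ) - (m : ℤ) - 2) * (B (n - h - 1) m : ℤ)) := by
  obtain ⟨N, rfl⟩ : ∃ N, n = N + 1 := ⟨n - 1, (Nat.succ_pred_eq_of_pos hn).symm⟩
  obtain ⟨M, rfl⟩ : ∃ M, m = M + 1 := ⟨m - 1, (Nat.succ_pred_eq_of_pos hm).symm⟩
  have hk := congrArg (coeff N) (key M)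
  rw [coeff_derivative, coeff_FS_pow, coeff_mul,
    Finset.Nat.sum_antidiagonal_eq_sum_range_succ_mk] at hk
  calc ((N + 1 : ℕ) : ℤ) * (B (N + 1) (M + 1) : ℤ)
      = (B (N + 1) (M + 1) : ℤ) * ((N : ℤ) + 1) := by push_cast; ring
    _ = ∑ h ∈ Finset.range (N + 1), (catalan h : ℤ) *
          (((M + 1 : ℕ) : ℤ) * (B (N + 1 - h - 1) (M + 1 - 1) : ℤ)
            + (2 * ((N + 1 : ℕ) : ℤ) - 2 * (h : ℤ) - ((M + 1 : ℕ) : ℤ) - 2)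
              * (B (N + 1 - h - 1) (M + 1) : ℤ)) := by
        rw [hk]
        refine Finset.sum_congr rfl fun h hh => ?_
        have hhN : h ≤ N := Nat.lt_succ_iff.mp (Finset.mem_range.mp hh)
        rw [coeff_CS, coeff_G]
        have e1 : N + 1 - h - 1 = N - h := by omega
        rw [e1, Nat.add_sub_cancel]
        have e2 : ((N - h : ℕ) : ℤ) = (N : ℤ) - (h : ℤ) := by
          push_cast [Nat.cast_sub hhN]; ring
        rw [e2]
        push_cast
        ring
end
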